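/- If p ∈ ℝ[x] has degree less than 2n, then p ∈ 𝒫_n if and only if all of the coefficients of p are nonnegative. -/

import Mathlib

open Polynomial Matrix

/-- `Pn n p` means the real polynomial `p` preserves entrywise nonnegativity of all
`n`-by-`n` nonnegative real matrices. -/
def Pn (n : ℕ) (p : Polynomial ℝ) : Prop :=
  ∀ A : Matrix (Fin n) (Fin n) ℝ, (∀ i j, 0 ≤ A i j) →
    ∀ i j, 0 ≤ ((Polynomial.aeval A) p) i j

/-- The `r mod n`-part of a real polynomial. -/
noncomputable def rpart (p : Polynomial ℝ) (n r : ℕ) : Polynomial ℝ :=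
  ∑ j ∈ Finset.range (p.natDegree + 1),
    if j % n = r then Polynomial.C (p.coeff j) * Polynomial.X ^ j else 0

noncomputable def cyc (n : ℕ) (s : ℝ) : Matrix (Fin n) (Fin n) ℝ :=
  fun i j => if ((i : ℕ) + 1) % n = (j : ℕ) then (if (i : ℕ) + 1 = n then s else 1) else 0

lemma cyc_pow (n : ℕ) (hn : 0 < n) (s : ℝ) (m : ℕ) (i j : Fin n) :
    ((cyc n s) ^ m) i j =
      if ((i : ℕ) + m) % n = (j : ℕ) then s ^ (((i : ℕ) + m) / n) else 0 := by
  induction m generalizing i with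
  | zero =>
    have h1 : ((i : ℕ) + 0) % n = (i : ℕ) := by simp [Nat.mod_eq_of_lt i.isLt]
    have h2 : ((i : ℕ) + 0) / n = 0 := by simp [Nat.div_eq_of_lt i.isLt]
    rw [pow_zero, Matrix.one_apply, h1, h2]
    simp [Fin.ext_iff]
  | succ m ih =>
    rw [pow_succ', Matrix.mul_apply]
    set k0 : Fin n := ⟨((i : ℕ) + 1) % n, Nat.mod_lt _ hn⟩ with hk0
    have hA : ∀ k : Fin n, cyc n s i k =
        if k = k0 then (if (i : ℕ) + 1 = n then s else 1) else 0 := by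
      intro k
      have hiff : (((i : ℕ) + 1) % n = (k : ℕ)) ↔ (k = k0) := by
        rw [Fin.ext_iff]; simp [hk0, eq_comm]
      simp only [cyc, hiff]
    rw [Finset.sum_congr rfl (fun k _ => by rw [hA k, ite_mul, zero_mul])]
    rw [Finset.sum_ite_eq' Finset.univ k0 (fun k => (if (i : ℕ) + 1 = n then s else 1) * ((cyc n s) ^ m) k j)]
    simp only [Finset.mem_univ, if_true]
    rw [ih k0]
    have hin : (i : ℕ) + 1 ≤ n := i.isLt
    rcases eq_or_lt_of_le hin with he | hl
    · have h0 : (k0 : ℕ) = 0 := by simp [hk0, he]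
      rw [h0, if_pos he]
      have hc : (0 + m) % n = ((i : ℕ) + (m + 1)) % n := by
        have : (i : ℕ) + (m + 1) = n + m := by omega
        rw [this, Nat.add_mod_left]; simp
      have hdiv : ((i : ℕ) + (m + 1)) / n = (0 + m) / n + 1 := by
        have h : (i : ℕ) + (m + 1) = m + n := by omega
        rw [h, Nat.add_div_right _ hn, zero_add]
      rw [← hc, hdiv]
      split_ifs with h
      · ring
      · ring
    · have h0 : (k0 : ℕ) = (i : ℕ) + 1 := by simp [hk0, Nat.mod_eq_of_lt hl]
      rw [h0, if_neg (by omega)]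
      have : (i : ℕ) + 1 + m = (i : ℕ) + (m + 1) := by omega
      rw [this, one_mul]

lemma pow_entry_nonneg {n : ℕ} {A : Matrix (Fin n) (Fin n) ℝ} (hA : ∀ i j, 0 ≤ A i j)
    (m : ℕ) (i j : Fin n) : 0 ≤ (A ^ m) i j := by
  induction m generalizing i j with
  | zero => rw [pow_zero, Matrix.one_apply]; split_ifs <;> norm_num
  | succ m ih =>
    rw [pow_succ, Matrix.mul_apply]
    exact Finset.sum_nonneg fun k _ => mul_nonneg (ih i k) (hA k j)

theorem stmt_11 (n : ℕ) (p : Polynomial ℝ) (hd : p.natDegree < 2 * n) :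
    Pn n p ↔ ∀ k, 0 ≤ p.coeff k := by
  have hn : 0 < n := by omega
  constructor
  · intro hP k
    by_cases hk : p.natDegree < k
    · rw [p.coeff_eq_zero_of_natDegree_lt hk]
    push_neg at hk
    have hkn : k < 2 * n := lt_of_le_of_lt hk hd
    have hr : k % n < n := Nat.mod_lt _ hn
    have key : ∀ s : ℝ, 0 ≤ s → 0 ≤ p.coeff (k % n) + p.coeff (n + k % n) * s := by
      intro s hs
      have hA : ∀ i j, 0 ≤ cyc n s i j := by
        intro i j; unfold cyc; split_ifs <;> norm_num [hs]
      have hentry := hP (cyc n s) hA ⟨0, hn⟩ ⟨k % n, hr⟩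
      rw [Polynomial.aeval_eq_sum_range' hd, Matrix.sum_apply] at hentry
      have hterm : ∀ m ∈ Finset.range (2 * n),
          (p.coeff m • (cyc n s) ^ m) (⟨0, hn⟩ : Fin n) (⟨k % n, hr⟩ : Fin n) =
            if m % n = k % n then p.coeff m * s ^ (m / n) else 0 := by
        intro m _
        rw [Matrix.smul_apply, cyc_pow n hn, smul_eq_mul]
        simp only [zero_add]
        split_ifs <;> simp_all
      rw [Finset.sum_congr rfl hterm, two_mul, Finset.sum_range_add] at hentry
      have h1 : ∀ m ∈ Finset.range n,
          (if m % n = k % n then p.coeff m * s ^ (m / n) else 0) =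
            (if m = k % n then p.coeff m * 1 else 0) := by
        intro m hm
        rw [Finset.mem_range] at hm
        rw [Nat.mod_eq_of_lt hm, Nat.div_eq_of_lt hm, pow_zero]
      have h2 : ∀ m ∈ Finset.range n,
          (if (n + m) % n = k % n then p.coeff (n + m) * s ^ ((n + m) / n) else 0) =
            (if m = k % n then p.coeff (n + m) * s else 0) := by
        intro m hm
        rw [Finset.mem_range] at hm
        rw [Nat.add_mod_left, Nat.mod_eq_of_lt hm, Nat.add_div_left _ hn,
          Nat.div_eq_of_lt hm, pow_one]
      rw [Finset.sum_congr rfl h1, Finset.sum_congr rfl h2,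
        Finset.sum_ite_eq' (Finset.range n) (k % n) (fun m => p.coeff m * 1),
        Finset.sum_ite_eq' (Finset.range n) (k % n) (fun m => p.coeff (n + m) * s),
        if_pos (Finset.mem_range.mpr hr), if_pos (Finset.mem_range.mpr hr), mul_one] at hentry
      exact hentry
    rcases Nat.lt_or_ge k n with h | h
    · have hkk : k % n = k := Nat.mod_eq_of_lt h
      have h0 := key 0 le_rfl
      rw [hkk] at h0
      linarith
    · have hmod : k % n = k - n := by
        rw [Nat.mod_eq_sub_mod h, Nat.mod_eq_of_lt (by omega)]
      have hk2 : n + k % n = k := by omega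
      have hc0 : 0 ≤ p.coeff (k % n) := by have := key 0 le_rfl; simpa using this
      by_contra hneg
      push_neg at hneg
      rw [← hk2] at hneg
      set c := p.coeff (n + k % n) with hc
      have hcne : c ≠ 0 := ne_of_lt hneg
      have hs : 0 ≤ (p.coeff (k % n) + 1) / (-c) := by
        apply div_nonneg (by linarith) (by linarith)
      have hkey := key _ hs
      have hcalc : c * ((p.coeff (k % n) + 1) / (-c)) = -(p.coeff (k % n) + 1) := by
        field_simp
      linarith
  · intro hc A hA i j
    rw [Polynomial.aeval_eq_sum_range' hd, Matrix.sum_apply]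
    refine Finset.sum_nonneg fun m _ => ?_
    rw [Matrix.smul_apply, smul_eq_mul]
    exact mul_nonneg (hc m) (pow_entry_nonneg hA m i j)
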